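/- There exist a constant C > 0 and an integer n₀ ≥ 1 (both depending only on θ and the sequence (p_i)) such that for every real δ ∈ [0,1] and every integer n ≥ n₀ one has Σ_{i≥1} (1 − exp(−n δ p_i)) ≤ C · α(n) · δ^{θ/2}. (Here Σ_{i≥1}(1 − e^{−s p_i}) is the expected number E R(s) of occupied urns at Poisson time s in the Poissonized infinite urn scheme.) -/

import Mathlib

open Filter Topology Real

set_option maxHeartbeats 2000000 in
/-- Lemma 2.1 for θ ∈ (0,1): there exist `C > 0` and `n₀ ≥ 1` such that for every
`δ ∈ [0,1]` and every `n ≥ n₀`, the expected number of occupied urns at Poisson time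
`n δ`, namely `∑_{i} (1 − exp(−n δ p_i))`, is at most `C · α(n) · δ^{θ/2}`,
where `α(x) = #{i : p_i ≥ 1/x} = x^θ L(x)` with `L` slowly varying. -/
theorem occupancy_expectation_bound_theta_lt_one
    (p : ℕ → ℝ) (hp_pos : ∀ i, 0 < p i) (hp_mono : Antitone p)
    (hp_sum : ∑' i, p i = 1)
    (θ : ℝ) (hθ : θ ∈ Set.Ioo (0 : ℝ) 1)
    (L : ℝ → ℝ)
    (hL : ∀ c > (0 : ℝ), Tendsto (fun x => L (c * x) / L x) atTop (𝓝 1))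
    (hα : ∀ x > (0 : ℝ), ((Set.ncard {i : ℕ | p i ≥ 1 / x} : ℝ)) = x ^ θ * L x) :
    ∃ C > (0 : ℝ), ∃ n₀ : ℕ, 1 ≤ n₀ ∧
      ∀ δ : ℝ, δ ∈ Set.Icc (0 : ℝ) 1 → ∀ n : ℕ, n₀ ≤ n →
        ∑' i, (1 - Real.exp (-((n : ℝ) * δ * p i)))
          ≤ C * ((Set.ncard {i : ℕ | p i ≥ 1 / (n : ℝ)} : ℝ)) * δ ^ (θ / 2) := by
  obtain ⟨hθ0, hθ1⟩ := hθ
  set A : ℝ → ℝ := fun x => ((Set.ncard {i : ℕ | p i ≥ 1 / x} : ℕ) : ℝ) with hA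
  -- summability of p
  have hsum : Summable p := by
    by_contra h
    rw [tsum_eq_zero_of_not_summable h] at hp_sum
    norm_num at hp_sum
  -- finiteness of the level sets
  have hfin : ∀ x : ℝ, 0 < x → {i : ℕ | p i ≥ 1 / x}.Finite := by
    intro x hx
    have h0 : Tendsto p atTop (𝓝 0) := hsum.tendsto_atTop_zero
    have hev : ∀ᶠ i in atTop, p i < 1 / x :=
      h0.eventually_lt_const (by positivity)
    obtain ⟨N, hN⟩ := eventually_atTop.mp hev
    apply (Set.finite_Iio N).subset
    intro i hi
    simp only [Set.mem_Iio]
    by_contra hiN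
    exact absurd (hN i (le_of_not_gt hiN)) (not_lt.mpr hi)
  have hAnn : ∀ x : ℝ, 0 ≤ A x := fun x => Nat.cast_nonneg _
  -- monotonicity of A on (0,∞)
  have hmono : ∀ x y : ℝ, 0 < x → x ≤ y → A x ≤ A y := by
    intro x y hx hxy
    have hsub : {i : ℕ | p i ≥ 1 / x} ⊆ {i : ℕ | p i ≥ 1 / y} := by
      intro i hi
      exact le_trans (one_div_le_one_div_of_le hx hxy) hi
    exact_mod_cast Nat.cast_le.mpr (Set.ncard_le_ncard hsub (hfin y (hx.trans_le hxy)))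
  -- A eventually at least 1
  have hA1 : ∀ᶠ x : ℝ in atTop, 1 ≤ A x := by
    filter_upwards [eventually_ge_atTop (1 / p 0), eventually_gt_atTop (0 : ℝ)] with x h1 h2
    have h3 : (0 : ℕ) ∈ {i : ℕ | p i ≥ 1 / x} := by
      simp only [Set.mem_setOf_eq, ge_iff_le]
      rw [div_le_iff₀ h2]
      have := (div_le_iff₀ (hp_pos 0)).mp h1
      linarith
    have h4 : 0 < Set.ncard {i : ℕ | p i ≥ 1 / x} :=
      (Set.ncard_pos (hfin x h2)).mpr ⟨0, h3⟩
    exact_mod_cast Nat.one_le_cast.mpr h4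
  -- positivity of L eventually
  set θ' : ℝ := (1 + θ) / 2 with hθ'def
  have hθ'θ : θ < θ' := by rw [hθ'def]; linarith
  have hθ'1 : θ' < 1 := by rw [hθ'def]; linarith
  have hLpos : ∀ᶠ x : ℝ in atTop, 0 < L x := by
    filter_upwards [hA1, eventually_gt_atTop (0 : ℝ)] with x h1 hx
    have h2 : A x = x ^ θ * L x := hα x hx
    have h3 : (0 : ℝ) < x ^ θ := rpow_pos_of_pos hx θ
    nlinarith
  -- upper doubling bound
  have hup : ∀ᶠ x : ℝ in atTop, A (2 * x) ≤ (2 : ℝ) ^ θ' * A x := by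
    have h1 : (1 : ℝ) < 2 ^ (θ' - θ) :=
      Real.one_lt_rpow_iff_of_pos (by norm_num) |>.mpr (Or.inl ⟨by norm_num, by linarith⟩)
    filter_upwards [(hL 2 (by norm_num)).eventually_lt_const h1, hLpos,
      eventually_gt_atTop (0 : ℝ)] with x hr hLx hx
    have hL2 : L (2 * x) < 2 ^ (θ' - θ) * L x := (div_lt_iff₀ hLx).mp hr
    calc A (2 * x) = (2 * x) ^ θ * L (2 * x) := hα _ (by positivity)
      _ ≤ (2 * x) ^ θ * (2 ^ (θ' - θ) * L x) :=
          mul_le_mul_of_nonneg_left hL2.le (rpow_nonneg (by positivity) θ)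
      _ = (2 : ℝ) ^ θ' * (x ^ θ * L x) := by
          rw [Real.mul_rpow (by norm_num) hx.le,
            show θ' = θ + (θ' - θ) by ring, Real.rpow_add (by norm_num)]
          ring
      _ = (2 : ℝ) ^ θ' * A x := by rw [show A x = x ^ θ * L x from hα x hx]
  -- lower doubling bound
  have hlow : ∀ᶠ x : ℝ in atTop, (2 : ℝ) ^ (θ / 2) * A x ≤ A (2 * x) := by
    have h1 : (2 : ℝ) ^ (θ / 2 - θ) < 1 :=
      Real.rpow_lt_one_of_one_lt_of_neg (by norm_num) (by linarith)
    filter_upwards [(hL 2 (by norm_num)).eventually_const_lt h1, hLpos,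
      eventually_gt_atTop (0 : ℝ)] with x hr hLx hx
    have hL2 : 2 ^ (θ / 2 - θ) * L x < L (2 * x) := (lt_div_iff₀ hLx).mp hr
    calc (2 : ℝ) ^ (θ / 2) * A x = (2 : ℝ) ^ (θ / 2) * (x ^ θ * L x) := by rw [show A x = x ^ θ * L x from hα x hx]
      _ = (2 * x) ^ θ * (2 ^ (θ / 2 - θ) * L x) := by
          rw [Real.mul_rpow (by norm_num) hx.le,
            show (θ : ℝ) / 2 = θ + (θ / 2 - θ) by ring, Real.rpow_add (by norm_num)]
          ring
      _ ≤ (2 * x) ^ θ * L (2 * x) :=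
          mul_le_mul_of_nonneg_left hL2.le (rpow_nonneg (by positivity) θ)
      _ = A (2 * x) := (hα _ (by positivity)).symm
  -- halving bound
  have hhalf : ∀ᶠ x : ℝ in atTop, A (x / 2) ≤ (2 : ℝ) ^ (-(θ / 2)) * A x := by
    have h1 : (1 : ℝ) < 2 ^ (θ / 2) :=
      Real.one_lt_rpow_iff_of_pos (by norm_num) |>.mpr (Or.inl ⟨by norm_num, by linarith⟩)
    filter_upwards [(hL (1 / 2) (by norm_num)).eventually_lt_const h1, hLpos,
      eventually_gt_atTop (0 : ℝ)] with x hr hLx hx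
    have hL2 : L (1 / 2 * x) < 2 ^ (θ / 2) * L x := (div_lt_iff₀ hLx).mp hr
    calc A (x / 2) = (x / 2) ^ θ * L (x / 2) := hα _ (by positivity)
      _ = (x / 2) ^ θ * L (1 / 2 * x) := by ring_nf
      _ ≤ (x / 2) ^ θ * (2 ^ (θ / 2) * L x) :=
          mul_le_mul_of_nonneg_left hL2.le (rpow_nonneg (by positivity) θ)
      _ = (2 : ℝ) ^ (-(θ / 2)) * (x ^ θ * L x) := by
          rw [Real.div_rpow hx.le (by norm_num),
            show -(θ / 2) = θ / 2 - θ by ring, Real.rpow_sub (by norm_num)]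
          ring
      _ = (2 : ℝ) ^ (-(θ / 2)) * A x := by rw [show A x = x ^ θ * L x from hα x hx]
  -- extract a threshold T0
  obtain ⟨T0', hT0'⟩ := eventually_atTop.mp (hA1.and (hup.and (hlow.and hhalf)))
  set T0 : ℝ := max T0' 1 with hT0def
  have hT1 : (1 : ℝ) ≤ T0 := le_max_right _ _
  have hT0pos : (0 : ℝ) < T0 := lt_of_lt_of_le one_pos hT1
  have key : ∀ x : ℝ, T0 ≤ x → 1 ≤ A x ∧ A (2 * x) ≤ (2 : ℝ) ^ θ' * A x ∧
      (2 : ℝ) ^ (θ / 2) * A x ≤ A (2 * x) ∧ A (x / 2) ≤ (2 : ℝ) ^ (-(θ / 2)) * A x :=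
    fun x hx => hT0' x (le_trans (le_max_left _ _) hx)
  -- helper: ((2:ℝ)^e)^k = ((2^k : ℝ))^e
  have hpow : ∀ (e : ℝ) (k : ℕ), ((2 : ℝ) ^ e) ^ k = ((2 : ℝ) ^ k) ^ e := by
    intro e k
    rw [← Real.rpow_natCast ((2 : ℝ) ^ e) k, ← Real.rpow_mul (by norm_num),
      ← Real.rpow_natCast (2 : ℝ) k, ← Real.rpow_mul (by norm_num), mul_comm]
  -- iterated doubling upper bound
  have P1 : ∀ (k : ℕ) (x : ℝ), T0 ≤ x → A (2 ^ k * x) ≤ ((2 : ℝ) ^ θ') ^ k * A x := by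
    intro k
    induction k with
    | zero => intro x _; simp
    | succ k ih =>
      intro x hx
      have hxpos : 0 < x := hT0pos.trans_le hx
      have h2k : T0 ≤ 2 ^ k * x :=
        hx.trans (le_mul_of_one_le_left hxpos.le (one_le_pow₀ (by norm_num)))
      have h1 : A (2 ^ (k + 1) * x) = A (2 * (2 ^ k * x)) := by ring_nf
      rw [h1, pow_succ]
      calc A (2 * (2 ^ k * x)) ≤ (2 : ℝ) ^ θ' * A (2 ^ k * x) := (key _ h2k).2.1
        _ ≤ (2 : ℝ) ^ θ' * (((2 : ℝ) ^ θ') ^ k * A x) :=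
            mul_le_mul_of_nonneg_left (ih x hx) (rpow_nonneg (by norm_num) _)
        _ = ((2 : ℝ) ^ θ') ^ k * (2 : ℝ) ^ θ' * A x := by ring
  -- iterated halving bound
  have P2 : ∀ (k : ℕ) (x : ℝ), T0 ≤ x / 2 ^ k → A (x / 2 ^ k) ≤ ((2 : ℝ) ^ (-(θ / 2))) ^ k * A x := by
    intro k
    induction k with
    | zero => intro x _; simp
    | succ k ih =>
      intro x hx
      have hxp : (0 : ℝ) < x / 2 ^ (k + 1) := hT0pos.trans_le hx
      have hx0 : (0 : ℝ) < x := by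
        by_contra h
        push_neg at h
        have : x / 2 ^ (k + 1) ≤ 0 := div_nonpos_of_nonpos_of_nonneg h (by positivity)
        linarith
      have hstep : T0 ≤ x / 2 ^ k := by
        refine hx.trans (div_le_div_of_nonneg_left hx0.le (by positivity) ?_)
        exact pow_le_pow_right₀ (by norm_num) (Nat.le_succ k)
      have heq : x / 2 ^ (k + 1) = (x / 2 ^ k) / 2 := by
        rw [pow_succ]; ring
      rw [heq, pow_succ]
      calc A ((x / 2 ^ k) / 2) ≤ (2 : ℝ) ^ (-(θ / 2)) * A (x / 2 ^ k) := (key _ hstep).2.2.2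
        _ ≤ (2 : ℝ) ^ (-(θ / 2)) * (((2 : ℝ) ^ (-(θ / 2))) ^ k * A x) :=
            mul_le_mul_of_nonneg_left (ih x hstep) (rpow_nonneg (by norm_num) _)
        _ = ((2 : ℝ) ^ (-(θ / 2))) ^ k * (2 : ℝ) ^ (-(θ / 2)) * A x := by ring
  -- iterated doubling lower bound
  have P3 : ∀ k : ℕ, ((2 : ℝ) ^ (θ / 2)) ^ k * A T0 ≤ A (2 ^ k * T0) := by
    intro k
    induction k with
    | zero => simp
    | succ k ih =>
      have h2k : T0 ≤ 2 ^ k * T0 :=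
        le_mul_of_one_le_left hT0pos.le (one_le_pow₀ (by norm_num))
      have h1 : A (2 ^ (k + 1) * T0) = A (2 * (2 ^ k * T0)) := by ring_nf
      rw [h1, pow_succ]
      calc ((2 : ℝ) ^ (θ / 2)) ^ k * (2 : ℝ) ^ (θ / 2) * A T0
          = (2 : ℝ) ^ (θ / 2) * (((2 : ℝ) ^ (θ / 2)) ^ k * A T0) := by ring
        _ ≤ (2 : ℝ) ^ (θ / 2) * A (2 ^ k * T0) :=
            mul_le_mul_of_nonneg_left ih (rpow_nonneg (by norm_num) _)
        _ ≤ A (2 * (2 ^ k * T0)) := (key _ h2k).2.2.1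
  -- polynomial lower bound for A
  set c₅ : ℝ := A T0 * ((2 * T0) ^ (θ / 2))⁻¹ with hc₅def
  have hc₅pos : 0 < c₅ := by
    apply mul_pos (lt_of_lt_of_le one_pos (key T0 le_rfl).1)
    exact inv_pos.mpr (rpow_pos_of_pos (by linarith) _)
  have hlb : ∀ x : ℝ, T0 ≤ x → c₅ * x ^ (θ / 2) ≤ A x := by
    intro x hx
    have hx0 : 0 < x := hT0pos.trans_le hx
    have h1 : (1 : ℝ) ≤ x / T0 := (one_le_div hT0pos).mpr hx
    set m : ℕ := ⌊x / T0⌋₊ with hmdef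
    have hm1 : 1 ≤ m := Nat.le_floor (by exact_mod_cast h1)
    set k : ℕ := Nat.log 2 m with hkdef
    have h2k : ((2 : ℝ) ^ k) ≤ x / T0 := by
      calc ((2 : ℝ) ^ k) ≤ (m : ℝ) := by
            exact_mod_cast Nat.pow_log_le_self 2 (by omega)
        _ ≤ x / T0 := Nat.floor_le (by positivity)
    have h2k' : x / T0 < 2 ^ (k + 1) := by
      calc x / T0 < m + 1 := Nat.lt_floor_add_one _
        _ ≤ 2 ^ (k + 1) := by
            exact_mod_cast Nat.succ_le_of_lt (Nat.lt_pow_succ_log_self (by norm_num) m)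
    have hmain : A (2 ^ k * T0) ≤ A x :=
      hmono _ _ (by positivity) ((le_div_iff₀ hT0pos).mp h2k)
    have hx2 : x / (2 * T0) < 2 ^ k := by
      rw [pow_succ] at h2k'
      rw [div_lt_iff₀ (by linarith)]
      calc x = (x / T0) * T0 := by field_simp
        _ < (2 ^ k * 2) * T0 := by exact mul_lt_mul_of_pos_right h2k' hT0pos
        _ = 2 ^ k * (2 * T0) := by ring
    calc c₅ * x ^ (θ / 2) = A T0 * ((x / (2 * T0)) ^ (θ / 2)) := by
          rw [hc₅def, Real.div_rpow hx0.le (by linarith), div_eq_mul_inv]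
          ring
      _ ≤ A T0 * ((2 : ℝ) ^ k) ^ (θ / 2) := by
          apply mul_le_mul_of_nonneg_left _ (hAnn T0)
          exact Real.rpow_le_rpow (by positivity) hx2.le (by linarith)
      _ = ((2 : ℝ) ^ (θ / 2)) ^ k * A T0 := by rw [hpow]; ring
      _ ≤ A (2 ^ k * T0) := P3 k
      _ ≤ A x := hmain
  -- regular variation bound: A (x δ) ≤ 2^{θ/2} δ^{θ/2} A x
  have M1 : ∀ δ : ℝ, 0 < δ → δ ≤ 1 → ∀ x : ℝ, T0 ≤ x * δ →
      A (x * δ) ≤ (2 : ℝ) ^ (θ / 2) * δ ^ (θ / 2) * A x := by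
    intro δ hδ0 hδ1 x ht
    have htpos : 0 < x * δ := hT0pos.trans_le ht
    have hxpos : 0 < x := by
      rcases mul_pos_iff.mp htpos with h | h
      · exact h.1
      · linarith [h.2]
    have h1δ : (1 : ℝ) ≤ 1 / δ := one_le_one_div hδ0 hδ1
    set m : ℕ := ⌊1 / δ⌋₊ with hmdef
    have hm1 : 1 ≤ m := Nat.le_floor (by exact_mod_cast h1δ)
    set k : ℕ := Nat.log 2 m with hkdef
    have h2k : ((2 : ℝ) ^ k) ≤ 1 / δ := by
      calc ((2 : ℝ) ^ k) ≤ (m : ℝ) := by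
            exact_mod_cast Nat.pow_log_le_self 2 (by omega)
        _ ≤ 1 / δ := Nat.floor_le (by positivity)
    have h2k' : 1 / δ < 2 ^ (k + 1) := by
      calc 1 / δ < m + 1 := Nat.lt_floor_add_one _
        _ ≤ 2 ^ (k + 1) := by
            exact_mod_cast Nat.succ_le_of_lt (Nat.lt_pow_succ_log_self (by norm_num) m)
    have hδle : δ ≤ 1 / 2 ^ k := by
      rw [le_div_iff₀ (by positivity), mul_comm, ← le_div_iff₀ hδ0]
      exact h2k
    have hle : x * δ ≤ x / 2 ^ k := by
      rw [div_eq_mul_inv, ← one_div]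
      exact mul_le_mul_of_nonneg_left hδle hxpos.le
    have hT0k : T0 ≤ x / 2 ^ k := ht.trans hle
    have hδlow : 1 / (2 * δ) < 2 ^ k := by
      rw [div_lt_iff₀ (by positivity)]
      rw [pow_succ] at h2k'
      calc (1 : ℝ) = (1 / δ) * δ := by field_simp
        _ < (2 ^ k * 2) * δ := mul_lt_mul_of_pos_right h2k' hδ0
        _ = 2 ^ k * (2 * δ) := by ring
    calc A (x * δ) ≤ A (x / 2 ^ k) := hmono _ _ htpos hle
      _ ≤ ((2 : ℝ) ^ (-(θ / 2))) ^ k * A x := P2 k x hT0k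
      _ ≤ (2 * δ) ^ (θ / 2) * A x := by
          apply mul_le_mul_of_nonneg_right _ (hAnn x)
          rw [hpow]
          calc ((2 : ℝ) ^ k) ^ (-(θ / 2)) ≤ (1 / (2 * δ)) ^ (-(θ / 2)) := by
                apply Real.rpow_le_rpow_of_nonpos (by positivity) hδlow.le (by linarith)
            _ = (2 * δ) ^ (θ / 2) := by
                rw [one_div, Real.rpow_neg (by positivity), Real.inv_rpow (by positivity), inv_inv]
      _ = (2 : ℝ) ^ (θ / 2) * δ ^ (θ / 2) * A x := by
          rw [Real.mul_rpow (by norm_num) hδ0.le]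
  -- geometric constants
  set c₂ : ℝ := (2 : ℝ) ^ θ' with hc₂def
  have hc₂pos : 0 < c₂ := rpow_pos_of_pos (by norm_num) θ'
  have hr1 : c₂ / 2 < 1 := by
    rw [div_lt_one (by norm_num), hc₂def]
    calc (2 : ℝ) ^ θ' < 2 ^ (1 : ℝ) := Real.rpow_lt_rpow_of_exponent_lt (by norm_num) hθ'1
      _ = 2 := Real.rpow_one 2
  have hr0 : (0 : ℝ) ≤ c₂ / 2 := by positivity
  set C₁ : ℝ := c₂ * (1 - c₂ / 2)⁻¹ with hC₁def
  have hC₁pos : 0 < C₁ := mul_pos hc₂pos (inv_pos.mpr (by linarith))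
  -- tail sum bound
  have M2 : ∀ t : ℝ, T0 ≤ t → ∑' i : ↥({i : ℕ | p i ≥ 1 / t}ᶜ), p i.1 ≤ C₁ * A t / t := by
    intro t ht
    have ht0 : 0 < t := hT0pos.trans_le ht
    apply Summable.tsum_le_of_sum_le (hsum.subtype _)
    intro F
    have hmem : ∀ i : ↥({i : ℕ | p i ≥ 1 / t}ᶜ), p i.1 < 1 / t := by
      intro i
      have h2 := i.2
      simp only [Set.mem_compl_iff, Set.mem_setOf_eq, not_le, ge_iff_le] at h2
      exact h2
    set lvl : ↥({i : ℕ | p i ≥ 1 / t}ᶜ) → ℕ := fun i => Nat.log 2 ⌊1 / (t * p i.1)⌋₊ with hlvl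
    have hkey : ∀ i : ↥({i : ℕ | p i ≥ 1 / t}ᶜ),
        p i.1 ≤ (1 / 2) ^ (lvl i) / t ∧ 1 / (2 ^ (lvl i + 1) * t) ≤ p i.1 := by
      intro i
      have hp1 : 0 < p i.1 := hp_pos i.1
      have htp : t * p i.1 < 1 := by
        calc t * p i.1 < t * (1 / t) := mul_lt_mul_of_pos_left (hmem i) ht0
          _ = 1 := by field_simp
      have htp0 : 0 < t * p i.1 := by positivity
      have h1 : (1 : ℝ) < 1 / (t * p i.1) := one_lt_one_div htp0 htp
      have hfl1 : 1 ≤ ⌊1 / (t * p i.1)⌋₊ := Nat.le_floor (by exact_mod_cast h1.le)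
      constructor
      · have h2 : ((2 : ℝ) ^ (lvl i)) ≤ 1 / (t * p i.1) := by
          calc ((2 : ℝ) ^ (lvl i)) ≤ (⌊1 / (t * p i.1)⌋₊ : ℝ) := by
                exact_mod_cast Nat.pow_log_le_self 2 (by omega)
            _ ≤ 1 / (t * p i.1) := Nat.floor_le (by positivity)
        have h2' : 2 ^ (lvl i) * (t * p i.1) ≤ 1 := (le_div_iff₀ htp0).mp h2
        rw [div_pow, one_pow, div_div, le_div_iff₀ (by positivity : (0:ℝ) < 2 ^ (lvl i) * t)]
        calc p i.1 * (2 ^ (lvl i) * t) = 2 ^ (lvl i) * (t * p i.1) := by ring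
          _ ≤ 1 := h2'
      · have h3 : 1 / (t * p i.1) < 2 ^ (lvl i + 1) := by
          calc 1 / (t * p i.1) < ⌊1 / (t * p i.1)⌋₊ + 1 := Nat.lt_floor_add_one _
            _ ≤ 2 ^ (lvl i + 1) := by
                exact_mod_cast Nat.succ_le_of_lt (Nat.lt_pow_succ_log_self (by norm_num) _)
        have h3' : 1 < 2 ^ (lvl i + 1) * (t * p i.1) := (div_lt_iff₀ htp0).mp h3
        rw [div_le_iff₀ (by positivity : (0:ℝ) < 2 ^ (lvl i + 1) * t)]
        calc (1 : ℝ) ≤ 2 ^ (lvl i + 1) * (t * p i.1) := h3'.le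
          _ = p i.1 * (2 ^ (lvl i + 1) * t) := by ring
    set K : ℕ := F.sup lvl with hK
    have hmaps : ∀ i ∈ F, lvl i ∈ Finset.range (K + 1) := fun i hi =>
      Finset.mem_range.mpr (Nat.lt_succ_of_le (Finset.le_sup hi))
    have hinner : ∀ k ∈ Finset.range (K + 1),
        ∑ i ∈ F.filter (fun i => lvl i = k), p i.1 ≤ A (2 ^ (k + 1) * t) * ((1 / 2) ^ k / t) := by
      intro k _
      have hcard : (((F.filter (fun i => lvl i = k)).card : ℕ) : ℝ) ≤ A (2 ^ (k + 1) * t) := by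
        have hsub : (↑((F.filter (fun i => lvl i = k)).image Subtype.val) : Set ℕ) ⊆
            {j : ℕ | p j ≥ 1 / (2 ^ (k + 1) * t)} := by
          intro j hj
          simp only [Finset.coe_image, Set.mem_image, Finset.mem_coe, Finset.mem_filter] at hj
          obtain ⟨i, ⟨hiF, hik⟩, rfl⟩ := hj
          have h4 := (hkey i).2
          rw [hik] at h4
          exact h4
        calc (((F.filter (fun i => lvl i = k)).card : ℕ) : ℝ)
            = (((F.filter (fun i => lvl i = k)).image Subtype.val).card : ℝ) := by
              rw [Finset.card_image_of_injective _ Subtype.val_injective]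
          _ = ((↑((F.filter (fun i => lvl i = k)).image Subtype.val) : Set ℕ).ncard : ℝ) := by
              rw [Set.ncard_coe_finset]
          _ ≤ A (2 ^ (k + 1) * t) := by
              exact Nat.cast_le.mpr (Set.ncard_le_ncard hsub (hfin _ (by positivity)))
      calc ∑ i ∈ F.filter (fun i => lvl i = k), p i.1
          ≤ ∑ _i ∈ F.filter (fun i => lvl i = k), ((1 / 2) ^ k / t) := by
            apply Finset.sum_le_sum
            intro i hi
            obtain ⟨hiF, hik⟩ := Finset.mem_filter.mp hi
            have h5 := (hkey i).1
            rw [hik] at h5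
            exact h5
        _ = ((F.filter (fun i => lvl i = k)).card : ℝ) * ((1 / 2) ^ k / t) := by
            rw [Finset.sum_const, nsmul_eq_mul]
        _ ≤ A (2 ^ (k + 1) * t) * ((1 / 2) ^ k / t) :=
            mul_le_mul_of_nonneg_right hcard (by positivity)
    calc ∑ i ∈ F, p i.1
        = ∑ k ∈ Finset.range (K + 1), ∑ i ∈ F.filter (fun i => lvl i = k), p i.1 :=
          (Finset.sum_fiberwise_of_maps_to hmaps _).symm
      _ ≤ ∑ k ∈ Finset.range (K + 1), A (2 ^ (k + 1) * t) * ((1 / 2) ^ k / t) :=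
          Finset.sum_le_sum hinner
      _ ≤ ∑ k ∈ Finset.range (K + 1), (c₂ ^ (k + 1) * A t) * ((1 / 2) ^ k / t) := by
          apply Finset.sum_le_sum
          intro k _
          exact mul_le_mul_of_nonneg_right (P1 (k + 1) t ht) (by positivity)
      _ = (A t / t * c₂) * ∑ k ∈ Finset.range (K + 1), (c₂ / 2) ^ k := by
          rw [Finset.mul_sum]
          apply Finset.sum_congr rfl
          intro k _
          rw [div_pow, div_pow, one_pow, pow_succ]
          field_simp
      _ ≤ (A t / t * c₂) * (1 - c₂ / 2)⁻¹ := by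
          apply mul_le_mul_of_nonneg_left _ (by positivity)
          rw [← tsum_geometric_of_lt_one hr0 hr1]
          exact Summable.sum_le_tsum _ (fun i _ => by positivity)
            (summable_geometric_of_lt_one hr0 hr1)
      _ = C₁ * A t / t := by rw [hC₁def]; ring
  -- choose the constant and threshold
  set Cf : ℝ := max ((1 + C₁) * (2 : ℝ) ^ (θ / 2)) (T0 / c₅) with hCf
  have hCpos : 0 < Cf := lt_max_of_lt_right (div_pos hT0pos hc₅pos)
  refine ⟨Cf, hCpos, max 1 ⌈T0⌉₊, le_max_left _ _, ?_⟩
  intro δ hδ n hn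
  obtain ⟨hδ0, hδ1⟩ := hδ
  have hnT0 : T0 ≤ (n : ℝ) := by
    have h1 : ⌈T0⌉₊ ≤ n := le_trans (le_max_right _ _) hn
    exact le_trans (Nat.le_ceil T0) (by exact_mod_cast h1)
  have hn0 : (0 : ℝ) < (n : ℝ) := hT0pos.trans_le hnT0
  suffices hgoal : ∑' i, (1 - Real.exp (-((n : ℝ) * δ * p i))) ≤ Cf * A (n : ℝ) * δ ^ (θ / 2) by
    exact hgoal
  rcases eq_or_lt_of_le hδ0 with hδz | hδpos
  · rw [← hδz]
    simp [Real.zero_rpow (ne_of_gt (by positivity : (0:ℝ) < θ / 2))]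
  set t : ℝ := (n : ℝ) * δ with htdef
  have ht0 : 0 < t := mul_pos hn0 hδpos
  have hexp_le : ∀ x : ℝ, 1 - Real.exp (-x) ≤ x := fun x => by
    nlinarith [Real.add_one_le_exp (-x)]
  have hf0 : ∀ i, 0 ≤ 1 - Real.exp (-(t * p i)) := by
    intro i
    have h1 : Real.exp (-(t * p i)) ≤ 1 := Real.exp_le_one_iff.mpr (by
      have := (hp_pos i); nlinarith)
    linarith
  have hf1 : ∀ i, 1 - Real.exp (-(t * p i)) ≤ 1 := fun i => by
    have := Real.exp_pos (-(t * p i)); linarith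
  have hfle : ∀ i, 1 - Real.exp (-(t * p i)) ≤ t * p i := fun i => hexp_le _
  have hfs : Summable (fun i => 1 - Real.exp (-(t * p i))) :=
    Summable.of_nonneg_of_le hf0 hfle (hsum.mul_left t)
  have hAnd : 0 ≤ A (n : ℝ) * δ ^ (θ / 2) := by positivity
  rcases le_or_gt T0 t with hcase | hcase
  · -- main case : n δ ≥ T0
    set s : Set ℕ := {i : ℕ | p i ≥ 1 / t} with hs
    have hsfin : s.Finite := hfin t ht0
    have hsplit : (∑' i : s, (1 - Real.exp (-(t * p i.1))))
        + (∑' i : ↥sᶜ, (1 - Real.exp (-(t * p i.1))))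
        = ∑' i, (1 - Real.exp (-(t * p i))) :=
      Summable.tsum_subtype_add_tsum_subtype_compl hfs s
    have hpart1 : (∑' i : s, (1 - Real.exp (-(t * p i.1)))) ≤ A t := by
      haveI := hsfin.fintype
      rw [tsum_fintype]
      calc ∑ i : s, (1 - Real.exp (-(t * p i.1))) ≤ ∑ _i : s, (1 : ℝ) :=
            Finset.sum_le_sum (fun i _ => hf1 i.1)
        _ = (Fintype.card s : ℝ) := by simp
        _ = (s.ncard : ℝ) := by rw [← Nat.card_coe_set_eq, Nat.card_eq_fintype_card]
        _ = A t := rfl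
    have hpart2 : (∑' i : ↥sᶜ, (1 - Real.exp (-(t * p i.1)))) ≤ C₁ * A t := by
      calc (∑' i : ↥sᶜ, (1 - Real.exp (-(t * p i.1)))) ≤ ∑' i : ↥sᶜ, t * p i.1 :=
            Summable.tsum_le_tsum (fun i => hfle i.1) (hfs.subtype _) ((hsum.mul_left t).subtype _)
        _ = t * ∑' i : ↥sᶜ, p i.1 := tsum_mul_left
        _ ≤ t * (C₁ * A t / t) := mul_le_mul_of_nonneg_left (M2 t hcase) ht0.le
        _ = C₁ * A t := by field_simp
    have hAt : A t ≤ (2 : ℝ) ^ (θ / 2) * δ ^ (θ / 2) * A (n : ℝ) :=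
      M1 δ hδpos hδ1 (n : ℝ) hcase
    calc ∑' i, (1 - Real.exp (-(t * p i)))
        = (∑' i : s, (1 - Real.exp (-(t * p i.1))))
          + (∑' i : ↥sᶜ, (1 - Real.exp (-(t * p i.1)))) := hsplit.symm
      _ ≤ A t + C₁ * A t := add_le_add hpart1 hpart2
      _ = (1 + C₁) * A t := by ring
      _ ≤ (1 + C₁) * ((2 : ℝ) ^ (θ / 2) * δ ^ (θ / 2) * A (n : ℝ)) :=
          mul_le_mul_of_nonneg_left hAt (by linarith)
      _ = ((1 + C₁) * (2 : ℝ) ^ (θ / 2)) * (A (n : ℝ) * δ ^ (θ / 2)) := by ring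
      _ ≤ Cf * (A (n : ℝ) * δ ^ (θ / 2)) :=
          mul_le_mul_of_nonneg_right (le_max_left _ _) hAnd
      _ = Cf * A (n : ℝ) * δ ^ (θ / 2) := by ring
  · -- small time case : n δ < T0
    have hS : ∑' i, (1 - Real.exp (-(t * p i))) ≤ t := by
      calc ∑' i, (1 - Real.exp (-(t * p i))) ≤ ∑' i, t * p i :=
            Summable.tsum_le_tsum hfle hfs (hsum.mul_left t)
        _ = t * ∑' i, p i := tsum_mul_left
        _ = t := by rw [hp_sum, mul_one]
    have ht1 : t ^ (1 - θ / 2) ≤ T0 := by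
      calc t ^ (1 - θ / 2) ≤ T0 ^ (1 - θ / 2) :=
            Real.rpow_le_rpow ht0.le hcase.le (by linarith)
        _ ≤ T0 ^ (1 : ℝ) := Real.rpow_le_rpow_of_exponent_le hT1 (by linarith)
        _ = T0 := Real.rpow_one T0
    have ht2 : t ^ (θ / 2) = (n : ℝ) ^ (θ / 2) * δ ^ (θ / 2) :=
      Real.mul_rpow hn0.le hδpos.le
    have ht3 : (n : ℝ) ^ (θ / 2) ≤ A (n : ℝ) / c₅ :=
      (le_div_iff₀ hc₅pos).mpr (by linarith [hlb (n : ℝ) hnT0])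
    calc ∑' i, (1 - Real.exp (-(t * p i))) ≤ t := hS
      _ = t ^ (θ / 2) * t ^ (1 - θ / 2) := by
          rw [← Real.rpow_add ht0, show θ / 2 + (1 - θ / 2) = 1 by ring, Real.rpow_one]
      _ ≤ t ^ (θ / 2) * T0 :=
          mul_le_mul_of_nonneg_left ht1 (rpow_nonneg ht0.le _)
      _ = ((n : ℝ) ^ (θ / 2) * δ ^ (θ / 2)) * T0 := by rw [ht2]
      _ ≤ ((A (n : ℝ) / c₅) * δ ^ (θ / 2)) * T0 := by
          apply mul_le_mul_of_nonneg_right _ hT0pos.le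
          exact mul_le_mul_of_nonneg_right ht3 (rpow_nonneg hδpos.le _)
      _ = (T0 / c₅) * (A (n : ℝ) * δ ^ (θ / 2)) := by ring
      _ ≤ Cf * (A (n : ℝ) * δ ^ (θ / 2)) :=
          mul_le_mul_of_nonneg_right (le_max_right _ _) hAnd
      _ = Cf * A (n : ℝ) * δ ^ (θ / 2) := by ring
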